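/- A permutation σ of [n] has no two consecutive descents and no descent at the last position if and only if its increasing binary min-tree T(σ) has no node whose only child is a left child. -/

import Mathlib

open Finset
open scoped Classical

/-- entry of a permutation of `Fin n` at 0-indexed position `i` (0-based values). -/
def ent {n : ℕ} (σ : Equiv.Perm (Fin n)) (i : ℕ) : ℕ :=
  if h : i < n then (σ ⟨i, h⟩ : ℕ) else 0

/-- the triple `(a, b, c)` of distinct values, reduced to a permutation in `S₃`, is odd. -/
def odd3 (a b c : ℕ) : Prop :=
  ((if b < a then 1 else 0) + (if c < a then 1 else 0) + (if c < b then 1 else 0)) % 2 = 1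

instance (a b c : ℕ) : Decidable (odd3 a b c) := by
  unfold odd3; infer_instance

/-- 3-descent set, 0-indexed positions (position `i` here is paper position `i+1`). -/
def D3 {n : ℕ} (σ : Equiv.Perm (Fin n)) : Finset ℕ :=
  (Finset.range (n - 2)).filter (fun i => odd3 (ent σ i) (ent σ (i + 1)) (ent σ (i + 2)))

/-- alternating descent set, 0-indexed positions. -/
def altD {n : ℕ} (σ : Equiv.Perm (Fin n)) : Finset ℕ :=
  (Finset.range (n - 1)).filter (fun i =>
    (Even i ∧ ent σ (i + 1) < ent σ i) ∨ (¬ Even i ∧ ent σ i < ent σ (i + 1)))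

/-- number of up-down alternating permutations of `[n]` (the Euler number `Eₙ`). -/
noncomputable def EulerNum (n : ℕ) : ℕ :=
  ((Finset.univ : Finset (Equiv.Perm (Fin n))).filter (fun τ =>
    ∀ i ∈ Finset.range (n - 1),
      (Even i ∧ ent τ i < ent τ (i + 1)) ∨ (¬ Even i ∧ ent τ (i + 1) < ent τ i))).card

/-- `c³ᵢ(σ)`, 0-indexed: number of `j > i+1` with `σᵢ σᵢ₊₁ σⱼ` odd. -/
def c3 {n : ℕ} (σ : Equiv.Perm (Fin n)) (i : ℕ) : ℕ :=
  ((Finset.range n).filter (fun j => i + 1 < j ∧ odd3 (ent σ i) (ent σ (i + 1)) (ent σ j))).card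

/-- `ĉᵢ(σ)`, 0-indexed. -/
def chat {n : ℕ} (σ : Equiv.Perm (Fin n)) (i : ℕ) : ℕ :=
  ((Finset.range n).filter (fun j => i < j ∧
    ((Even i ∧ ent σ j < ent σ i) ∨ (¬ Even i ∧ ent σ i < ent σ j)))).card

/-- `i₃` of an arbitrary word `f 0, f 1, ..., f (m-1)`. -/
def i3f (m : ℕ) (f : ℕ → ℕ) : ℕ :=
  ((Finset.range m ×ˢ Finset.range m).filter (fun p =>
    p.1 + 1 < p.2 ∧ odd3 (f p.1) (f (p.1 + 1)) (f p.2))).card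

/-- the 3-inversion statistic `i₃`. -/
def i3 {n : ℕ} (σ : Equiv.Perm (Fin n)) : ℕ := i3f n (ent σ)

/-- the word `1*σ` (0-based values): `0, σ₀+1, σ₁+1, ...`. -/
def oneStar {n : ℕ} (σ : Equiv.Perm (Fin n)) : ℕ → ℕ :=
  fun i => if i = 0 then 0 else ent σ (i - 1) + 1

/-- number of alternating inversions `î(σ)`. -/
def altInv {n : ℕ} (σ : Equiv.Perm (Fin n)) : ℕ :=
  ((Finset.range n ×ˢ Finset.range n).filter (fun p => p.1 < p.2 ∧
    ((Even p.1 ∧ ent σ p.2 < ent σ p.1) ∨ (¬ Even p.1 ∧ ent σ p.1 < ent σ p.2)))).card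

/-- number of inversions of the word `f 0, ..., f (m-1)`. -/
def invf (m : ℕ) (f : ℕ → ℕ) : ℕ :=
  ((Finset.range m ×ˢ Finset.range m).filter (fun p => p.1 < p.2 ∧ f p.2 < f p.1)).card

/-- major index of the word `f 0, ..., f (m-1)` (descent at 0-indexed `i` contributes `i+1`). -/
def majf (m : ℕ) (f : ℕ → ℕ) : ℕ :=
  ∑ i ∈ (Finset.range (m - 1)).filter (fun i => f (i + 1) < f i), (i + 1)

/-- `Â(m, r)`: number of permutations of `[m]` with `r - 1` alternating descents. -/
def Ahat (m r : ℕ) : ℕ :=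
  ((Finset.univ : Finset (Equiv.Perm (Fin m))).filter (fun σ => (altD σ).card + 1 = r)).card

/-- down-up alternating: `σ₁ > σ₂ < σ₃ > ⋯`. -/
def DownUp {n : ℕ} (σ : Equiv.Perm (Fin n)) : Prop :=
  ∀ i ∈ Finset.range (n - 1),
    (Even i ∧ ent σ (i + 1) < ent σ i) ∨ (¬ Even i ∧ ent σ i < ent σ (i + 1))

instance {n : ℕ} (σ : Equiv.Perm (Fin n)) : Decidable (DownUp σ) := by
  unfold DownUp; infer_instance

/-- up-down alternating: `σ₁ < σ₂ > σ₃ < ⋯`. -/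
def UpDown {n : ℕ} (σ : Equiv.Perm (Fin n)) : Prop :=
  ∀ i ∈ Finset.range (n - 1),
    (Even i ∧ ent σ i < ent σ (i + 1)) ∨ (¬ Even i ∧ ent σ (i + 1) < ent σ i)

inductive BTree where
  | leaf : BTree
  | node : BTree → ℕ → BTree → BTree
deriving DecidableEq

/-- min-tree of a word, with fuel for termination. -/
def minTreeAux : ℕ → List ℕ → BTree
  | 0, _ => .leaf
  | _, [] => .leaf
  | fuel + 1, a :: w =>
      let m := (a :: w).foldr min a
      let l := (a :: w).takeWhile (fun x => x != m)
      let r := ((a :: w).dropWhile (fun x => x != m)).drop 1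
      .node (minTreeAux fuel l) m (minTreeAux fuel r)

/-- the increasing binary min-tree `T(w)` of a word `w` with distinct letters. -/
def minTree (w : List ℕ) : BTree := minTreeAux w.length w

/-- no node has a lone left child. -/
def noLoneLeft : BTree → Prop
  | .leaf => True
  | .node l _ r => ¬(l ≠ .leaf ∧ r = .leaf) ∧ noLoneLeft l ∧ noLoneLeft r


section Aux

private lemma foldr_min_le (a : ℕ) (l : List ℕ) :
    l.foldr min a ≤ a ∧ ∀ x ∈ l, l.foldr min a ≤ x := by
  induction l with
  | nil => simp
  | cons b t ih =>
    refine ⟨le_trans (min_le_right _ _) ih.1, ?_⟩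
    intro x hx
    rcases List.mem_cons.1 hx with h | h
    · subst h; exact min_le_left _ _
    · exact le_trans (min_le_right _ _) (ih.2 x h)

private lemma foldr_min_mem (a : ℕ) (l : List ℕ) : l.foldr min a ∈ a :: l := by
  induction l with
  | nil => simp
  | cons b t ih =>
    simp only [List.foldr_cons]
    rcases min_choice b (t.foldr min a) with h | h
    · rw [h]; simp
    · rw [h]
      rcases List.mem_cons.1 ih with h' | h' <;> simp [h']

private lemma dropWhile_head_false {p : ℕ → Bool} :
    ∀ (l : List ℕ) (b : ℕ) (r : List ℕ), l.dropWhile p = b :: r → p b = false := by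
  intro l
  induction l with
  | nil => intro b r h; simp [List.dropWhile] at h
  | cons x t ih =>
    intro b r h
    rw [List.dropWhile_cons] at h
    split at h
    · exact ih _ _ h
    · cases h
      simpa using ‹¬ p x = true›

private lemma split_spec (a : ℕ) (w : List ℕ) :
    ∃ w₁ w₂, a :: w = w₁ ++ ((a :: w).foldr min a) :: w₂ ∧
      w₁ = (a :: w).takeWhile (fun x => x != (a :: w).foldr min a) ∧
      w₂ = (((a :: w).dropWhile (fun x => x != (a :: w).foldr min a)).drop 1) ∧
      (∀ x ∈ w₁, (a :: w).foldr min a < x) ∧ (∀ x ∈ w₂, (a :: w).foldr min a ≤ x) := by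
  obtain ⟨m, hm⟩ : ∃ m, (a :: w).foldr min a = m := ⟨_, rfl⟩
  have hmem : m ∈ a :: w := by
    have h := foldr_min_mem a (a :: w)
    rw [hm] at h
    rcases List.mem_cons.1 h with h | h
    · rw [h]; exact List.mem_cons_self
    · exact h
  have hle : ∀ x ∈ a :: w, m ≤ x := by
    have h := (foldr_min_le a (a :: w)).2
    rw [hm] at h
    exact h
  rw [hm]
  have hdw : (a :: w).dropWhile (fun x => x != m) ≠ [] := by
    intro h
    have := List.dropWhile_eq_nil_iff.1 h m hmem
    simp at this
  obtain ⟨b, r, hbr⟩ := List.exists_cons_of_ne_nil hdw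
  have hb : b = m := by
    have := dropWhile_head_false (p := fun x => x != m) (a :: w) b r hbr
    simpa using this
  rw [hb] at hbr
  refine ⟨(a :: w).takeWhile (fun x => x != m), r, ?_, rfl, ?_, ?_, ?_⟩
  · conv_lhs => rw [← List.takeWhile_append_dropWhile (p := fun x => x != m) (l := a :: w)]
    rw [hbr]
  · rw [hbr]; simp
  · intro x hx
    have hpx := List.mem_takeWhile_imp hx
    have hxl : x ∈ a :: w := (List.takeWhile_prefix _).subset hx
    have hne : x ≠ m := by simpa using hpx
    exact lt_of_le_of_ne (hle x hxl) (Ne.symm hne)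
  · intro x hx
    have hxl : x ∈ a :: w := by
      rw [← List.takeWhile_append_dropWhile (p := fun y => y != m) (l := a :: w), hbr]
      exact List.mem_append_right _ (List.mem_cons_of_mem _ hx)
    exact hle x hxl

private lemma minTreeAux_succ (f : ℕ) (a : ℕ) (w : List ℕ) :
    minTreeAux (f + 1) (a :: w) =
      .node (minTreeAux f ((a :: w).takeWhile (fun x => x != (a :: w).foldr min a)))
        ((a :: w).foldr min a)
        (minTreeAux f (((a :: w).dropWhile (fun x => x != (a :: w).foldr min a)).drop 1)) := rfl

private lemma minTree_cons_eq (a : ℕ) (w : List ℕ) :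
    minTree (a :: w) = minTreeAux (w.length + 1) (a :: w) := rfl

private lemma minTreeAux_eq : ∀ (fuel : ℕ) (w : List ℕ), w.length ≤ fuel →
    minTreeAux fuel w = minTree w := by
  intro fuel
  induction fuel using Nat.strong_induction_on with
  | _ fuel ih =>
    intro w hw
    rcases w with _ | ⟨a, t⟩
    · rcases fuel with _ | f <;> rfl
    · rcases fuel with _ | f
      · simp at hw
      · obtain ⟨w₁, w₂, heq, hw₁, hw₂, _, _⟩ := split_spec a t
        have hlen : t.length + 1 = w₁.length + (w₂.length + 1) := by
          simpa using congrArg List.length heq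
        have hwf : t.length ≤ f := by simpa using hw
        rw [minTree_cons_eq, minTreeAux_succ, minTreeAux_succ, ← hw₁, ← hw₂]
        rw [ih f (Nat.lt_succ_self _) w₁ (by omega), ih f (Nat.lt_succ_self _) w₂ (by omega),
          ih t.length (by omega) w₁ (by omega), ih t.length (by omega) w₂ (by omega)]

private lemma minTree_cons (a : ℕ) (t : List ℕ) :
    ∃ w₁ m w₂, a :: t = w₁ ++ m :: w₂ ∧ (∀ x ∈ w₁, m < x) ∧ (∀ x ∈ w₂, m ≤ x) ∧
      minTree (a :: t) = .node (minTree w₁) m (minTree w₂) := by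
  obtain ⟨w₁, w₂, heq, hw₁, hw₂, h1, h2⟩ := split_spec a t
  refine ⟨w₁, _, w₂, heq, h1, h2, ?_⟩
  have hlen : t.length + 1 = w₁.length + (w₂.length + 1) := by
    simpa using congrArg List.length heq
  rw [minTree_cons_eq, minTreeAux_succ, ← hw₁, ← hw₂]
  rw [minTreeAux_eq t.length w₁ (by omega), minTreeAux_eq t.length w₂ (by omega)]

private lemma minTree_eq_leaf_iff (w : List ℕ) : minTree w = .leaf ↔ w = [] := by
  rcases w with _ | ⟨a, t⟩
  · simp [minTree, minTreeAux]
  · obtain ⟨w₁, m, w₂, _, _, _, htree⟩ := minTree_cons a t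
    rw [htree]
    simp

/-- no two consecutive descents and no descent at the end. -/
private def good : List ℕ → Prop
  | [] => True
  | [_] => True
  | [a, b] => ¬ b < a
  | a :: b :: c :: t => ¬(b < a ∧ c < b) ∧ good (b :: c :: t)

private lemma good_cons_min (m : ℕ) (w : List ℕ) (h : ∀ x ∈ w, m ≤ x) :
    good (m :: w) ↔ good w := by
  rcases w with _ | ⟨c, w⟩
  · simp [good]
  · rcases w with _ | ⟨d, w⟩
    · have : ¬ c < m := not_lt.2 (h c (by simp))
      simp [good, this]
    · have : ¬ c < m := not_lt.2 (h c (by simp))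
      simp [good, this]

private lemma good_split : ∀ (w₁ : List ℕ) (m : ℕ) (w₂ : List ℕ),
    (∀ x ∈ w₁, m < x) → (∀ x ∈ w₂, m ≤ x) →
    (good (w₁ ++ m :: w₂) ↔ good w₁ ∧ good w₂ ∧ ¬(w₁ ≠ [] ∧ w₂ = [])) := by
  intro w₁
  induction w₁ with
  | nil =>
    intro m w₂ h1 h2
    simp [good_cons_min m w₂ h2, good]
  | cons a w₁ ih =>
    intro m w₂ h1 h2
    have ham : m < a := h1 a (by simp)
    rcases w₁ with _ | ⟨b, w₁⟩
    · rcases w₂ with _ | ⟨c, w₂⟩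
      · simp [good, ham]
      · have hcm : ¬ c < m := not_lt.2 (h2 c (by simp))
        have hthis : good (m :: c :: w₂) ↔ good (c :: w₂) := good_cons_min m _ h2
        simp only [List.nil_append, List.cons_append]
        rw [show good (a :: m :: c :: w₂) ↔ (¬(m < a ∧ c < m) ∧ good (m :: c :: w₂)) from Iff.rfl]
        simp [good, hcm, hthis]
    · have ihb := ih m w₂ (fun x hx => h1 x (List.mem_cons_of_mem _ hx)) h2
      have hbm : m < b := h1 b (by simp)
      rcases w₁ with _ | ⟨c, w₁⟩
      · -- list is a :: b :: m :: w₂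
        simp only [List.cons_append, List.nil_append] at ihb ⊢
        rw [show good (a :: b :: m :: w₂) ↔ (¬(b < a ∧ m < b) ∧ good (b :: m :: w₂)) from Iff.rfl]
        rw [ihb]
        rw [show good [a, b] ↔ ¬ b < a from Iff.rfl]
        have t0 : good ([b] : List ℕ) := trivial
        have t1 : ([b] : List ℕ) ≠ [] := by simp
        have t2 : ([a, b] : List ℕ) ≠ [] := by simp
        tauto
      · -- list is a :: b :: c :: (w₁ ++ m :: w₂)
        simp only [List.cons_append] at ihb ⊢
        rw [show good (a :: b :: c :: (w₁ ++ m :: w₂)) ↔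
            (¬(b < a ∧ c < b) ∧ good (b :: c :: (w₁ ++ m :: w₂))) from Iff.rfl]
        rw [ihb]
        rw [show good (a :: b :: c :: w₁) ↔ (¬(b < a ∧ c < b) ∧ good (b :: c :: w₁)) from Iff.rfl]
        have t1 : (b :: c :: w₁ : List ℕ) ≠ [] := by simp
        have t2 : (a :: b :: c :: w₁ : List ℕ) ≠ [] := by simp
        tauto

private lemma good_iff_tree : ∀ (N : ℕ) (w : List ℕ), w.length ≤ N →
    (good w ↔ noLoneLeft (minTree w)) := by
  intro N
  induction N with
  | zero =>
    intro w hw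
    rw [List.length_eq_zero_iff.1 (Nat.le_zero.1 hw)]
    simp [good, minTree, minTreeAux, noLoneLeft]
  | succ N ih =>
    intro w hw
    rcases w with _ | ⟨a, t⟩
    · simp [good, minTree, minTreeAux, noLoneLeft]
    · obtain ⟨w₁, m, w₂, heq, h1, h2, htree⟩ := minTree_cons a t
      have hlen : t.length + 1 = w₁.length + (w₂.length + 1) := by
        simpa using congrArg List.length heq
      have htl : t.length ≤ N := by simpa using hw
      rw [htree, heq, good_split w₁ m w₂ h1 h2]
      have e1 := ih w₁ (by omega)
      have e2 := ih w₂ (by omega)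
      simp only [noLoneLeft, Ne, minTree_eq_leaf_iff]
      rw [← e1, ← e2]
      tauto

private lemma good_iff_idx : ∀ (l : List ℕ), good l ↔
    ((∀ i, i + 2 < l.length →
        ¬ (l.getD (i+1) 0 < l.getD i 0 ∧ l.getD (i+2) 0 < l.getD (i+1) 0)) ∧
     (2 ≤ l.length → ¬ l.getD (l.length - 1) 0 < l.getD (l.length - 2) 0)) := by
  intro l
  induction l with
  | nil => simp [good]
  | cons a l ih =>
    rcases l with _ | ⟨b, l⟩
    · simp [good]
    · rcases l with _ | ⟨c, l⟩
      · simp [good]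
      · rw [show good (a :: b :: c :: l) ↔ (¬(b < a ∧ c < b) ∧ good (b :: c :: l)) from Iff.rfl]
        rw [ih]
        simp only [List.length_cons]
        constructor
        · rintro ⟨h0, h1, h2⟩
          constructor
          · rintro (_ | i) hi
            · simpa using h0
            · have := h1 i (by omega)
              simpa using this
          · intro _
            have := h2 (by omega)
            have e1 : l.length + 1 + 1 + 1 - 1 = (l.length + 1 + 1 - 1) + 1 := by omega
            have e2 : l.length + 1 + 1 + 1 - 2 = (l.length + 1 + 1 - 2) + 1 := by omega
            rw [e1, e2, List.getD_cons_succ, List.getD_cons_succ]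
            exact this
        · rintro ⟨h1, h2⟩
          refine ⟨?_, ?_, ?_⟩
          · have := h1 0 (by omega)
            simpa using this
          · intro i hi
            have := h1 (i + 1) (by omega)
            simpa using this
          · intro _
            have := h2 (by omega)
            have e1 : l.length + 1 + 1 + 1 - 1 = (l.length + 1 + 1 - 1) + 1 := by omega
            have e2 : l.length + 1 + 1 + 1 - 2 = (l.length + 1 + 1 - 2) + 1 := by omega
            rw [e1, e2, List.getD_cons_succ, List.getD_cons_succ] at this
            exact this

private lemma ent_eq_getD {n : ℕ} (σ : Equiv.Perm (Fin n)) (i : ℕ) :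
    ent σ i = ((List.finRange n).map (fun j => (σ j : ℕ))).getD i 0 := by
  unfold ent
  split
  · next h =>
    rw [List.getD_eq_getElem _ _ (by simpa using h)]
    simp
  · next h =>
    rw [List.getD_eq_default _ _ (by simpa using not_lt.1 h)]

end Aux

theorem stmt15 (n : ℕ) (σ : Equiv.Perm (Fin n)) :
    ((∀ i, i + 2 < n → ¬(ent σ (i + 1) < ent σ i ∧ ent σ (i + 2) < ent σ (i + 1))) ∧
      (2 ≤ n → ¬ ent σ (n - 1) < ent σ (n - 2))) ↔
    noLoneLeft (minTree ((List.finRange n).map (fun i => (σ i : ℕ)))) := by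
  
  have hlen : ((List.finRange n).map (fun i => (σ i : ℕ))).length = n := by simp
  have key := (good_iff_idx ((List.finRange n).map (fun i => (σ i : ℕ)))).symm.trans
    (good_iff_tree (((List.finRange n).map (fun i => (σ i : ℕ))).length)
      ((List.finRange n).map (fun i => (σ i : ℕ))) le_rfl)
  rw [← key]
  simp only [hlen]
  constructor
  · rintro ⟨h1, h2⟩
    refine ⟨fun i hi => ?_, fun hn => ?_⟩
    · rw [← ent_eq_getD, ← ent_eq_getD, ← ent_eq_getD]
      exact h1 i hi
    · rw [← ent_eq_getD, ← ent_eq_getD]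
      exact h2 hn
  · rintro ⟨h1, h2⟩
    refine ⟨fun i hi => ?_, fun hn => ?_⟩
    · rw [ent_eq_getD, ent_eq_getD, ent_eq_getD]
      exact h1 i hi
    · rw [ent_eq_getD, ent_eq_getD]
      exact h2 hn
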